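/- arXiv:1608.04662 — 3 statements merged into one kernel-verified Lean document; each statement's English description precedes it below -/
import Mathlib

section
/- Assume the class of RN graphs has the Ramsey property, and assume for ordered posets A, B (as complete RN graphs) there is a sequence C₂, C₃, … of RN graphs with C_ℓ → (B)^A_2, C_ℓ containing no bad quasicycle of length in [2,ℓ], and homomorphisms h_ℓ: C_{ℓ+1} → C_ℓ. Then the class of ordered posets is Ramsey for the pair (A,B): there exists an ordered poset C with C → (B)^A_2. -/
/-- A bad quasicycle of length `j` in relations `R`, `N`. -/
def IsBadQuasicycle {V : Type*} (R N : V → V → Prop) (j : ℕ) (x : ℕ → V) : Prop :=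
  2 ≤ j ∧ (∀ i, i + 1 < j → R (x i) (x (i + 1))) ∧ N (x 0) (x (j - 1))

/-- A finite ordered poset: a strict partial order `R` on `Fin n` together with
the natural linear order on `Fin n` as a linear extension. -/
structure OPoset where
  n : ℕ
  R : Fin n → Fin n → Prop
  trans : ∀ x y z, R x y → R y z → R x z
  sub : ∀ x y, R x y → x < y

/-- An embedding of ordered posets: a strictly monotone map preserving `R`
in both directions (hence preserving the linear order in both directions). -/
structure OPoset.Emb (A B : OPoset) where
  f : Fin A.n → Fin B.n
  mono : StrictMono f
  hR : ∀ x y, A.R x y ↔ B.R (f x) (f y)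

/-- Composition of embeddings of ordered posets. -/
def OPoset.Emb.comp {A B C : OPoset} (g : B.Emb C) (e : A.Emb B) : A.Emb C where
  f := g.f ∘ e.f
  mono := g.mono.comp e.mono
  hR := fun x y => (e.hR x y).trans (g.hR (e.f x) (e.f y))

/-- `C → (B)^A_r` for ordered posets: every `r`-coloring of the copies
(embeddings) of `A` in `C` admits a copy of `B` in `C` all of whose copies of
`A` receive the same color. -/
def OPoset.Arrow (C B A : OPoset) (r : ℕ) : Prop :=
  ∀ χ : A.Emb C → Fin r, ∃ g : B.Emb C,
    ∀ e₁ e₂ : A.Emb B, χ (g.comp e₁) = χ (g.comp e₂)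

/-- A finite RN graph: two disjoint relations `R`, `N` on `Fin n`, both
contained in the natural (strict) linear order on `Fin n`. -/
structure RNGph where
  n : ℕ
  R : Fin n → Fin n → Prop
  N : Fin n → Fin n → Prop
  Rsub : ∀ x y, R x y → x < y
  Nsub : ∀ x y, N x y → x < y
  disj : ∀ x y, ¬(R x y ∧ N x y)

/-- An embedding of RN graphs: a strictly monotone map preserving `R` and `N`
in both directions. -/
structure RNGph.Emb (A B : RNGph) where
  f : Fin A.n → Fin B.n
  mono : StrictMono f
  hR : ∀ x y, A.R x y ↔ B.R (f x) (f y)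
  hN : ∀ x y, A.N x y ↔ B.N (f x) (f y)

/-- Composition of embeddings of RN graphs. -/
def RNGph.Emb.comp {A B C : RNGph} (g : B.Emb C) (e : A.Emb B) : A.Emb C where
  f := g.f ∘ e.f
  mono := g.mono.comp e.mono
  hR := fun x y => (e.hR x y).trans (g.hR (e.f x) (e.f y))
  hN := fun x y => (e.hN x y).trans (g.hN (e.f x) (e.f y))

/-- A homomorphism of RN graphs: maps `R`-edges to `R`-edges and
`N`-edges to `N`-edges. -/
structure RNGph.Hom (A B : RNGph) where
  f : Fin A.n → Fin B.n
  hR : ∀ x y, A.R x y → B.R (f x) (f y)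
  hN : ∀ x y, A.N x y → B.N (f x) (f y)

/-- `C → (B)^A_r` for RN graphs. -/
def RNGph.Arrow (C B A : RNGph) (r : ℕ) : Prop :=
  ∀ χ : A.Emb C → Fin r, ∃ g : B.Emb C,
    ∀ e₁ e₂ : A.Emb B, χ (g.comp e₁) = χ (g.comp e₂)

/-- The complete RN graph associated with an ordered poset: `N = < − R`. -/
def OPoset.toRN (P : OPoset) : RNGph where
  n := P.n
  R := P.R
  N := fun x y => x < y ∧ ¬ P.R x y
  Rsub := P.sub
  Nsub := fun _ _ h => h.1
  disj := fun _ _ h => h.2.2 h.1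

/- ### Auxiliary material -/

lemma transGen_lt_aux {n : ℕ} {r : Fin n → Fin n → Prop} (hr : ∀ x y, r x y → x < y)
    {a b : Fin n} (h : Relation.TransGen r a b) : a < b := by
  induction h with
  | single h => exact hr _ _ h
  | tail _ h ih => exact lt_trans ih (hr _ _ h)

/-- The transitive closure poset of an RN graph. -/
def RNGph.toPoset (E : RNGph) : OPoset where
  n := E.n
  R := Relation.TransGen E.R
  trans := fun _ _ _ h h' => Relation.TransGen.trans h h'
  sub := fun _ _ h => transGen_lt_aux E.Rsub h

lemma transGen_chain_aux {V : Type*} (r : V → V → Prop) {a b : V}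
    (h : Relation.TransGen r a b) :
    ∃ j, 2 ≤ j ∧ ∃ x : ℕ → V, x 0 = a ∧ x (j - 1) = b ∧
      ∀ i, i + 1 < j → r (x i) (x (i + 1)) := by
  induction h with
  | @single c hb =>
      refine ⟨2, le_refl _, fun i => if i = 0 then a else c, by simp, by simp, ?_⟩
      intro i hi
      have : i = 0 := by omega
      subst this
      simpa using hb
  | @tail b' c' _ hbc ih =>
      obtain ⟨j, hj2, x, hx0, hxj, hxe⟩ := ih
      refine ⟨j + 1, by omega, fun i => if i < j then x i else c', ?_, ?_, ?_⟩
      · simp only [if_pos (by omega : 0 < j)]; exact hx0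
      · show (if j < j then x j else c') = c'
        rw [if_neg (lt_irrefl j)]
      · intro i hi
        show r (if i < j then x i else c') (if i + 1 < j then x (i + 1) else c')
        rcases lt_or_ge (i + 1) j with h1 | h1
        · rw [if_pos (by omega : i < j), if_pos h1]
          exact hxe i h1
        · have hij : i = j - 1 := by omega
          rw [if_pos (by omega : i < j), if_neg (by omega : ¬ i + 1 < j), hij, hxj]
          exact hbc

lemma OPoset.Emb.ext' {A B : OPoset} {e e' : OPoset.Emb A B} (h : e.f = e'.f) : e = e' := by
  cases e; cases e'; cases h; rfl

/-- Lift an RN-graph embedding `A.toRN ↪ E` to a poset embedding `A ↪ E.toPoset`,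
assuming the transitive closure of `E.R` is disjoint from `E.N`. -/
def liftEmb {A : OPoset} {E : RNGph}
    (hdisj : ∀ x y : Fin E.n, Relation.TransGen E.R x y → ¬ E.N x y)
    (e : RNGph.Emb A.toRN E) : OPoset.Emb A E.toPoset where
  f := e.f
  mono := e.mono
  hR := by
    intro x y
    constructor
    · intro h
      exact Relation.TransGen.single ((e.hR x y).1 h)
    · intro h
      have hlt : e.f x < e.f y := transGen_lt_aux E.Rsub h
      have hxy : x < y := e.mono.lt_iff_lt.1 hlt
      by_contra hA
      exact hdisj _ _ h ((e.hN x y).1 ⟨hxy, hA⟩)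

/-- A poset embedding induces an RN-graph embedding of the associated complete RN graphs. -/
def toRNEmb {A B : OPoset} (e : OPoset.Emb A B) : RNGph.Emb A.toRN B.toRN where
  f := e.f
  mono := e.mono
  hR := e.hR
  hN := by
    intro x y
    show (x < y ∧ ¬ A.R x y) ↔ (e.f x < e.f y ∧ ¬ B.R (e.f x) (e.f y))
    exact and_congr e.mono.lt_iff_lt.symm (not_congr (e.hR x y))

/-- If RN graphs have the Ramsey property and for ordered posets `A`, `B`
(viewed as complete RN graphs) there is a sequence `C₂, C₃, …` of RN graphs
with `C_ℓ → (B)^A_2`, no bad quasicycle of length in `[2, ℓ]`, and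
homomorphisms `C_{ℓ+1} → C_ℓ`, then there is an ordered poset `C` with
`C → (B)^A_2`. -/
theorem stmt11 (A B : OPoset)
    (ramsey : ∀ A' B' : RNGph, ∃ C' : RNGph, RNGph.Arrow C' B' A' 2)
    (C : ℕ → RNGph)
    (hArrow : ∀ ℓ, 2 ≤ ℓ → RNGph.Arrow (C ℓ) B.toRN A.toRN 2)
    (hℓRN : ∀ ℓ, 2 ≤ ℓ → ∀ j, 2 ≤ j → j ≤ ℓ →
      ∀ x : ℕ → Fin (C ℓ).n, ¬ IsBadQuasicycle (C ℓ).R (C ℓ).N j x)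
    (hHom : ∀ ℓ, 2 ≤ ℓ → Nonempty (RNGph.Hom (C (ℓ + 1)) (C ℓ))) :
    ∃ D : OPoset, OPoset.Arrow D B A 2 := by
  set L := max 2 (C 2).n with hLdef
  have hL2 : 2 ≤ L := le_max_left _ _
  -- a composed homomorphism from `C L` down to `C 2`
  have homs : ∀ k, Nonempty (RNGph.Hom (C (2 + k)) (C 2)) := by
    intro k
    induction k with
    | zero => exact ⟨⟨id, fun _ _ h => h, fun _ _ h => h⟩⟩
    | succ k ih =>
      obtain ⟨g⟩ := ih
      obtain ⟨h⟩ := hHom (2 + k) (by omega)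
      exact ⟨⟨g.f ∘ h.f, fun x y hr => g.hR _ _ (h.hR _ _ hr),
              fun x y hn => g.hN _ _ (h.hN _ _ hn)⟩⟩
  obtain ⟨h2⟩ : Nonempty (RNGph.Hom (C L) (C 2)) := by
    have := homs (L - 2)
    rwa [show 2 + (L - 2) = L by omega] at this
  -- the transitive closure of `R` on `C L` is disjoint from `N`
  have key : ∀ x y : Fin (C L).n, Relation.TransGen (C L).R x y → ¬ (C L).N x y := by
    intro a b htc hNab
    obtain ⟨j, hj2, x, hx0, hxj, hxe⟩ := transGen_chain_aux _ htc
    have mono : ∀ i, i + 1 < j → ((h2.f (x i)) : ℕ) + 1 ≤ (h2.f (x (i + 1)) : ℕ) := by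
      intro i hi
      have h := (C 2).Rsub _ _ (h2.hR _ _ (hxe i hi))
      exact h
    have grow : ∀ i, i < j → i ≤ ((h2.f (x i)) : ℕ) := by
      intro i
      induction i with
      | zero => intro _; exact Nat.zero_le _
      | succ i ih =>
        intro hi
        have h1 := mono i hi
        have h2' := ih (by omega)
        omega
    have hjn : j ≤ (C 2).n := by
      have hg := grow (j - 1) (by omega)
      have hb : ((h2.f (x (j - 1))) : ℕ) < (C 2).n := (h2.f (x (j - 1))).isLt
      omega
    refine hℓRN L hL2 j hj2 (le_trans hjn (le_max_right _ _)) x ⟨hj2, hxe, ?_⟩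
    rw [hx0, hxj]
    exact hNab
  -- the poset obtained by transitive closure
  refine ⟨(C L).toPoset, ?_⟩
  intro χ
  obtain ⟨g, hg⟩ := hArrow L hL2 (fun e => χ (liftEmb key e))
  refine ⟨liftEmb key g, ?_⟩
  intro e₁ e₂
  have h1 : (liftEmb key g).comp e₁ = liftEmb key (g.comp (toRNEmb e₁)) :=
    OPoset.Emb.ext' rfl
  have h2' : (liftEmb key g).comp e₂ = liftEmb key (g.comp (toRNEmb e₂)) :=
    OPoset.Emb.ext' rfl
  rw [h1, h2']
  exact hg (toRNEmb e₁) (toRNEmb e₂)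
end

section
/- Let D be an RN graph with no bad quasicycle of length ≤ ℓ−1, and let P be an RN graph with a homomorphism f: P → D. If x₁,…,x_{ℓ'} is a bad quasicycle in P of length ℓ' ≤ ℓ, then ℓ' = ℓ and f is injective on {x₁,…,x_ℓ} with f(x₁),…,f(x_ℓ) a bad quasicycle of length ℓ in D. -/
/-- `(X, R, N, ≤)` is an RN graph: `R`, `N` are disjoint and contained in `<`. -/
def IsRNGraph {V : Type*} [LinearOrder V] (R N : V → V → Prop) : Prop :=
  (∀ x y, R x y → x < y) ∧ (∀ x y, N x y → x < y) ∧ ∀ x y, ¬(R x y ∧ N x y)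

/-- An RN graph is good if it contains no bad quasicycle of any length. -/
def GoodRN {V : Type*} (R N : V → V → Prop) : Prop :=
  ∀ j (x : ℕ → V), ¬ IsBadQuasicycle R N j x

/-- If `D` has no bad quasicycle of length `≤ ℓ − 1` and `f : P → D` is a
homomorphism, then any bad quasicycle of length `ℓ' ≤ ℓ` in `P` has
`ℓ' = ℓ`, `f` is injective on its vertices, and its image is a bad
quasicycle of length `ℓ` in `D`. -/
theorem stmt14 {V W : Type*} [LinearOrder V] [LinearOrder W]
    (RP NP : V → V → Prop) (RD ND : W → W → Prop)
    (hP : IsRNGraph RP NP) (hD : IsRNGraph RD ND)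
    (f : V → W)
    (hfR : ∀ x y, RP x y → RD (f x) (f y))
    (hfN : ∀ x y, NP x y → ND (f x) (f y))
    (ℓ : ℕ)
    (hno : ∀ j, 2 ≤ j → j ≤ ℓ - 1 → ∀ y : ℕ → W, ¬ IsBadQuasicycle RD ND j y)
    (ℓ' : ℕ) (hle : ℓ' ≤ ℓ)
    (x : ℕ → V) (hbad : IsBadQuasicycle RP NP ℓ' x) :
    ℓ' = ℓ ∧
    Set.InjOn f {v | ∃ i < ℓ, x i = v} ∧
    IsBadQuasicycle RD ND ℓ (fun i => f (x i)) := by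
  obtain ⟨h2, hR, hN⟩ := hbad
  have hgbad : IsBadQuasicycle RD ND ℓ' (fun i => f (x i)) :=
    ⟨h2, fun i hi => hfR _ _ (hR i hi), hfN _ _ hN⟩
  have heq : ℓ' = ℓ := by
    by_contra h
    exact hno ℓ' h2 (by omega) _ hgbad
  subst heq
  refine ⟨rfl, ?_, hgbad⟩
  have chain : ∀ j, j < ℓ' → ∀ i, i < j → f (x i) < f (x j) := by
    intro j
    induction j with
    | zero => omega
    | succ j ih =>
      intro hj i hi
      have hedge : f (x j) < f (x (j + 1)) := hD.1 _ _ (hfR _ _ (hR j hj))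
      rcases Nat.lt_succ_iff_lt_or_eq.mp hi with h | h
      · exact lt_trans (ih (by omega) i h) hedge
      · subst h; exact hedge
  rintro v ⟨i, hi, rfl⟩ w ⟨j, hj, rfl⟩ hfw
  rcases lt_trichotomy i j with h | h | h
  · exact absurd hfw (ne_of_lt (chain j hj i h))
  · subst h; rfl
  · exact absurd hfw.symm (ne_of_lt (chain i hi j h))
end

section
/- Let A be a complete good RN graph and D an RN graph without bad quasicycles of length ≤ ℓ−1 (ℓ ≥ 3), and suppose y₁,…,y_ℓ is a bad quasicycle of length ℓ in D. If r < s with s − r ≥ 2, (r,s) ≠ (1,ℓ), and à ∈ binom(D,A) is a copy of A containing y_r and y_s, then (y_r, y_s) ∈ N(D); moreover this leads to a bad quasicycle of length ≤ ℓ−1 in D, a contradiction — hence no copy of A in D contains two vertices y_r, y_s with s − r ≥ 2 and (r,s) ≠ (1,ℓ). -/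
/-- Let `A` be a complete (good) RN graph, let `D` be an RN graph without
bad quasicycles of length `≤ ℓ − 1` (`ℓ ≥ 3`), and let `y 0, …, y (ℓ-1)` be
a bad quasicycle of length `ℓ` in `D`. Then no copy of `A` in `D` contains
two vertices `y r`, `y s` with `s − r ≥ 2` other than the pair
`(y 0, y (ℓ-1))`. -/
theorem stmt15 {V W : Type*} [LinearOrder V] [LinearOrder W]
    (R N : V → V → Prop) (RA NA : W → W → Prop)
    (hD : IsRNGraph R N) (hA : IsRNGraph RA NA)
    (hAcomp : ∀ a b : W, a < b → RA a b ∨ NA a b)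
    (hAgood : GoodRN RA NA)
    (ℓ : ℕ) (hℓ : 3 ≤ ℓ)
    (hno : ∀ j, 2 ≤ j → j ≤ ℓ - 1 → ∀ z : ℕ → V, ¬ IsBadQuasicycle R N j z)
    (y : ℕ → V) (hbad : IsBadQuasicycle R N ℓ y)
    -- f is an embedding of A into D, i.e. a copy of A in D
    (f : W → V) (hmono : StrictMono f)
    (hfR : ∀ a b, RA a b ↔ R (f a) (f b))
    (hfN : ∀ a b, NA a b ↔ N (f a) (f b)) :
    ∀ r s, r + 2 ≤ s → s < ℓ → ¬ (r = 0 ∧ s = ℓ - 1) →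
      ¬ (y r ∈ Set.range f ∧ y s ∈ Set.range f) := by

  obtain ⟨-, hpath, hNe⟩ := hbad
  rintro r s hrs hsℓ hne ⟨⟨a, ha⟩, ⟨b, hb⟩⟩
  have hchain : ∀ k, r + k < ℓ → 0 < k → y r < y (r + k) := by
    intro k
    induction k with
    | zero => intro _ h; omega
    | succ n ih =>
      intro h _
      have hR := hD.1 _ _ (hpath (r + n) (by omega))
      rcases Nat.eq_zero_or_pos n with h0 | h0
      · subst h0; simpa using hR
      · exact (ih (by omega) h0).trans hR
  have hlt : y r < y s := by
    have := hchain (s - r) (by omega) (by omega)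
    rwa [show r + (s - r) = s by omega] at this
  have hab : a < b := hmono.lt_iff_lt.mp (by rw [ha, hb]; exact hlt)
  rcases hAcomp a b hab with hRA | hNA
  · have hRys : R (y r) (y s) := by rw [← ha, ← hb]; exact (hfR a b).mp hRA
    set d := s - r - 1 with hd
    refine hno (ℓ - d) (by omega) (by omega)
      (fun i => if i ≤ r then y i else y (i + d)) ⟨by omega, ?_, ?_⟩
    · intro i hi
      by_cases h1 : i + 1 ≤ r
      · simp only [if_pos h1, if_pos (by omega : i ≤ r)]
        exact hpath i (by omega)
      · by_cases h2 : i ≤ r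
        · have hir : i = r := by omega
          subst hir
          simp only [if_pos h2, if_neg h1]
          rw [show i + 1 + d = s by omega]
          exact hRys
        · simp only [if_neg h1, if_neg h2]
          rw [show i + 1 + d = i + d + 1 by omega]
          exact hpath (i + d) (by omega)
    · simp only [if_pos (Nat.zero_le r), if_neg (by omega : ¬ (ℓ - d - 1 ≤ r))]
      rw [show ℓ - d - 1 + d = ℓ - 1 by omega]
      exact hNe
  · have hNys : N (y r) (y s) := by rw [← ha, ← hb]; exact (hfN a b).mp hNA
    refine hno (s - r + 1) (by omega) (by omega) (fun i => y (r + i)) ⟨by omega, ?_, ?_⟩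
    · intro i hi
      show R (y (r + i)) (y (r + (i + 1)))
      rw [show r + (i + 1) = r + i + 1 by omega]
      exact hpath (r + i) (by omega)
    · simp only [Nat.add_zero]
      rw [show r + (s - r + 1 - 1) = s by omega]
      exact hNys
end
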